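/- For ν ∈ [0,1] and X ∈ B(H), Δ_{1,ν}(X) = (1 + |1−2ν|)·‖X‖, where Δ_{1,ν}(X) = w([[0, 2X],[2(1−2ν)X*, 0]]) is the numerical radius of the indicated block operator on H ⊕ H (since α = 2 and β = 0 when ρ = 1). -/

import Mathlib

open scoped InnerProductSpace

/-- Numerical radius of a bounded operator on a complex Hilbert space. -/
noncomputable def numRad {H : Type*} [NormedAddCommGroup H] [InnerProductSpace ℂ H]
    (T : H →L[ℂ] H) : ℝ :=
  ⨆ z : {z : H // ‖z‖ = 1}, ‖(⟪T z.1, z.1⟫_ℂ : ℂ)‖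

/-- Crawford number. -/
noncomputable def crawford {H : Type*} [NormedAddCommGroup H] [InnerProductSpace ℂ H]
    (T : H →L[ℂ] H) : ℝ :=
  ⨅ z : {z : H // ‖z‖ = 1}, ‖(⟪T z.1, z.1⟫_ℂ : ℂ)‖

/-- The 2×2 block operator matrix `[[A, B], [C, D]]` acting on `H ⊕ H`
(the ℓ² direct sum `WithLp 2 (H × H)`), sending `(x, y)` to `(Ax + By, Cx + Dy)`. -/
noncomputable def blk {H : Type*} [NormedAddCommGroup H] [InnerProductSpace ℂ H]
    (A B C D : H →L[ℂ] H) : WithLp 2 (H × H) →L[ℂ] WithLp 2 (H × H) :=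
  (((WithLp.prodContinuousLinearEquiv 2 ℂ H H).symm.toContinuousLinearMap).comp
    (((A.comp (ContinuousLinearMap.fst ℂ H H) + B.comp (ContinuousLinearMap.snd ℂ H H)).prod
      (C.comp (ContinuousLinearMap.fst ℂ H H) + D.comp (ContinuousLinearMap.snd ℂ H H))))).comp
    ((WithLp.prodContinuousLinearEquiv 2 ℂ H H).toContinuousLinearMap)

section Aux

variable {H : Type*} [NormedAddCommGroup H] [InnerProductSpace ℂ H] [CompleteSpace H]

lemma blk_inner_eq (c : ℝ) (X : H →L[ℂ] H) (z : WithLp 2 (H × H)) :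
    ⟪(blk 0 ((2 : ℂ) • X) (((2 * c : ℝ) : ℂ) • X.adjoint) 0) z, z⟫_ℂ
      = 2 * ⟪X z.snd, z.fst⟫_ℂ + (2*c : ℂ) * ⟪z.fst, X z.snd⟫_ℂ := by
  simp [blk, WithLp.prod_inner_apply, ContinuousLinearMap.adjoint_inner_left,
    inner_smul_left, inner_conj_symm, map_ofNat]

lemma blk_inner_norm_le (c : ℝ) (X : H →L[ℂ] H) (z : WithLp 2 (H × H)) (hz : ‖z‖ = 1) :
    ‖(⟪(blk 0 ((2 : ℂ) • X) (((2 * c : ℝ) : ℂ) • X.adjoint) 0) z, z⟫_ℂ : ℂ)‖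
      ≤ (1 + |c|) * ‖X‖ := by
  rw [blk_inner_eq]
  have h1 : ‖(⟪X z.snd, z.fst⟫_ℂ : ℂ)‖ ≤ ‖X‖ * ‖z.snd‖ * ‖z.fst‖ :=
    (norm_inner_le_norm _ _).trans (by
      have := X.le_opNorm z.snd
      have : ‖X z.snd‖ * ‖z.fst‖ ≤ ‖X‖ * ‖z.snd‖ * ‖z.fst‖ :=
        mul_le_mul_of_nonneg_right (X.le_opNorm z.snd) (norm_nonneg _)
      linarith)
  have h2 : ‖z.fst‖ ^ 2 + ‖z.snd‖ ^ 2 = 1 := by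
    rw [← WithLp.prod_norm_sq_eq_of_L2, hz]; norm_num
  have h3 : ‖(⟪z.fst, X z.snd⟫_ℂ : ℂ)‖ = ‖(⟪X z.snd, z.fst⟫_ℂ : ℂ)‖ := by
    rw [← inner_conj_symm]; exact RCLike.norm_conj _
  calc ‖2 * ⟪X z.snd, z.fst⟫_ℂ + (2*c : ℂ) * ⟪z.fst, X z.snd⟫_ℂ‖
      ≤ ‖(2 : ℂ) * ⟪X z.snd, z.fst⟫_ℂ‖ + ‖((2*c : ℝ) : ℂ) * ⟪z.fst, X z.snd⟫_ℂ‖ := by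
        push_cast
        exact norm_add_le _ _
    _ = 2 * ‖(⟪X z.snd, z.fst⟫_ℂ : ℂ)‖ + (2 * |c|) * ‖(⟪X z.snd, z.fst⟫_ℂ : ℂ)‖ := by
        rw [norm_mul, norm_mul, h3, Complex.norm_real]
        have h5 : |(2*c : ℝ)| = 2 * |c| := by rw [abs_mul]; norm_num
        rw [Real.norm_eq_abs, h5]
        norm_num
    _ ≤ (1 + |c|) * ‖X‖ := by
        have h4 : 2 * ‖(⟪X z.snd, z.fst⟫_ℂ : ℂ)‖ ≤ ‖X‖ := by
          have h2' : ‖X‖ * ‖z.fst‖^2 + ‖X‖ * ‖z.snd‖^2 = ‖X‖ := by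
            rw [← mul_add, h2, mul_one]
          nlinarith [mul_nonneg (norm_nonneg X) (sq_nonneg (‖z.fst‖ - ‖z.snd‖))]
        have h6 := mul_le_mul_of_nonneg_left h4 (abs_nonneg c)
        nlinarith [mul_nonneg (abs_nonneg c) (norm_nonneg X)]

lemma blk_lower (c : ℝ) (X : H →L[ℂ] H) (v : H) (hv : ‖v‖ = 1) (hXv : X v ≠ 0) :
    (1 + |c|) * ‖X v‖ ≤ numRad (blk 0 ((2 : ℂ) • X) (((2 * c : ℝ) : ℂ) • X.adjoint) 0) := by
  set r : ℝ := ‖X v‖ with hr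
  have hr0 : 0 < r := norm_pos_iff.mpr hXv
  set θ : ℂ := if 0 ≤ c then 1 else Complex.I with hθdef
  have hθ : ‖θ‖ = 1 := by rw [hθdef]; split <;> simp
  set a : ℂ := ((((Real.sqrt 2)⁻¹ * r⁻¹ : ℝ)) : ℂ) * θ with ha
  set x : H := a • X v with hx
  set y : H := (((Real.sqrt 2)⁻¹ : ℝ) : ℂ) • v with hy
  set z : WithLp 2 (H × H) := (WithLp.equiv 2 (H × H)).symm (x, y) with hzdef
  have hs2 : (Real.sqrt 2) ^ 2 = 2 := Real.sq_sqrt (by norm_num)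
  have hs0 : (0:ℝ) < Real.sqrt 2 := by positivity
  have hz1 : z.fst = x := rfl
  have hz2 : z.snd = y := rfl
  have hnx : ‖x‖ = (Real.sqrt 2)⁻¹ := by
    rw [hx, norm_smul, ha, norm_mul, hθ, Complex.norm_real, Real.norm_eq_abs,
      abs_of_nonneg (by positivity)]
    field_simp
    rw [← hr]
  have hny : ‖y‖ = (Real.sqrt 2)⁻¹ := by
    rw [hy, norm_smul, Complex.norm_real, Real.norm_eq_abs,
      abs_of_nonneg (by positivity), hv, mul_one]
  have hz : ‖z‖ = 1 := by
    have h := WithLp.prod_norm_sq_eq_of_L2 z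
    rw [hz1, hz2, hnx, hny] at h
    have h1 : ‖z‖ ^ 2 = 1 := by
      rw [h]; field_simp; linarith [hs2]
    nlinarith [norm_nonneg z]
  have hrC : (r : ℂ) ≠ 0 := by exact_mod_cast hr0.ne'
  have hsC : ((Real.sqrt 2 : ℝ) : ℂ) ≠ 0 := by exact_mod_cast hs0.ne'
  have hs2C : ((Real.sqrt 2 : ℝ) : ℂ) ^ 2 = 2 := by exact_mod_cast hs2
  have key : ⟪X y, x⟫_ℂ = θ * ((2⁻¹ * r : ℝ) : ℂ) := by
    rw [hy, hx, ContinuousLinearMap.map_smul, inner_smul_left, inner_smul_right,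
      inner_self_eq_norm_sq_to_K, ha, ← hr, Complex.conj_ofReal]
    push_cast
    field_simp
    linear_combination (-θ * (r:ℂ)^2) * hs2C
  have hval : ⟪(blk 0 ((2 : ℂ) • X) (((2 * c : ℝ) : ℂ) • X.adjoint) 0) z, z⟫_ℂ
      = (θ + (c:ℂ) * (starRingEnd ℂ) θ) * (r : ℂ) := by
    have key2 : ⟪x, X y⟫_ℂ = (starRingEnd ℂ) (θ * ((2⁻¹ * r : ℝ) : ℂ)) := by
      rw [← inner_conj_symm, key]
    rw [blk_inner_eq, hz1, hz2, key, key2, map_mul, Complex.conj_ofReal]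
    push_cast
    ring
  have hnorm : ‖(⟪(blk 0 ((2 : ℂ) • X) (((2 * c : ℝ) : ℂ) • X.adjoint) 0) z, z⟫_ℂ : ℂ)‖
      = (1 + |c|) * r := by
    rw [hval, norm_mul, Complex.norm_real, Real.norm_eq_abs, abs_of_nonneg hr0.le]
    congr 1
    rw [hθdef]
    split
    · next h =>
      simp only [map_one, mul_one]
      rw [show (1 : ℂ) + (c:ℂ) = ((1 + c : ℝ) : ℂ) by push_cast; ring,
        Complex.norm_real, Real.norm_eq_abs, abs_of_nonneg (by linarith), abs_of_nonneg h]
    · next h =>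
      rw [Complex.conj_I]
      rw [show Complex.I + (c:ℂ) * (-Complex.I) = ((1 - c : ℝ) : ℂ) * Complex.I by push_cast; ring,
        norm_mul, Complex.norm_I, mul_one, Complex.norm_real, Real.norm_eq_abs]
      rw [abs_of_nonneg (by linarith [le_of_not_ge h]), abs_of_neg (lt_of_not_ge h)]
      ring
  have hbdd : BddAbove (Set.range fun w : {w : WithLp 2 (H × H) // ‖w‖ = 1} =>
      ‖(⟪(blk 0 ((2 : ℂ) • X) (((2 * c : ℝ) : ℂ) • X.adjoint) 0) w.1, w.1⟫_ℂ : ℂ)‖) := by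
    refine ⟨(1 + |c|) * ‖X‖, ?_⟩
    rintro _ ⟨w, rfl⟩
    exact blk_inner_norm_le c X w.1 w.2
  have := le_ciSup hbdd ⟨z, hz⟩
  rw [hnorm] at this
  exact this

end Aux

theorem Delta_one_eq {H : Type*} [NormedAddCommGroup H] [InnerProductSpace ℂ H]
    [CompleteSpace H] {ν : ℝ} (hν : ν ∈ Set.Icc (0 : ℝ) 1) (X : H →L[ℂ] H) :
    numRad (blk 0 ((2 : ℂ) • X) (((2 * (1 - 2*ν) : ℝ) : ℂ) • X.adjoint) 0) =
      (1 + |1 - 2*ν|) * ‖X‖ := by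
  set c : ℝ := 1 - 2*ν with hcdef
  obtain ⟨hν0, hν1⟩ := hν
  have hc : |c| ≤ 1 := by rw [abs_le]; constructor <;> [skip; skip] <;> simp [hcdef] <;> linarith
  refine le_antisymm (Real.iSup_le (fun w => blk_inner_norm_le c X w.1 w.2) (by positivity)) ?_
  rcases eq_or_ne ‖X‖ 0 with hX0 | hX0
  · rw [hX0, mul_zero]
    exact Real.iSup_nonneg fun _ => norm_nonneg _
  have hXpos : 0 < ‖X‖ := (norm_nonneg X).lt_of_ne' hX0
  refine le_of_forall_pos_le_add fun ε hε => ?_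
  set δ : ℝ := min (ε/4) (‖X‖/2) with hδdef
  have hδ0 : 0 < δ := lt_min (by linarith) (by linarith)
  have hδε : δ ≤ ε/4 := min_le_left _ _
  have hδX : δ ≤ ‖X‖/2 := min_le_right _ _
  have hrX : ‖X‖ - δ < ‖X‖ := by linarith
  obtain ⟨x, hx1, hx2⟩ := X.exists_lt_apply_of_lt_opNorm hrX
  have hXx : 0 < ‖X x‖ := lt_of_le_of_lt (by linarith) hx2
  have hx0 : x ≠ 0 := by
    intro h; rw [h] at hXx; simp at hXx
  have hnx : 0 < ‖x‖ := norm_pos_iff.mpr hx0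
  set v : H := ((‖x‖⁻¹ : ℝ) : ℂ) • x with hvdef
  have hv : ‖v‖ = 1 := by
    rw [hvdef, norm_smul, Complex.norm_real, Real.norm_eq_abs,
      abs_of_nonneg (by positivity)]
    field_simp
  have hXv : ‖X x‖ ≤ ‖X v‖ := by
    rw [hvdef, ContinuousLinearMap.map_smul, norm_smul, Complex.norm_real,
      Real.norm_eq_abs, abs_of_nonneg (by positivity)]
    nlinarith [inv_anti₀ hnx hx1.le]
  have hXvr : ‖X‖ - δ < ‖X v‖ := lt_of_lt_of_le hx2 hXv
  have hXvne : X v ≠ 0 := by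
    intro h
    rw [h, norm_zero] at hXvr; linarith
  have hmain := blk_lower c X v hv hXvne
  have h1 : (1 + |c|) * (‖X‖ - δ) ≤ (1 + |c|) * ‖X v‖ :=
    mul_le_mul_of_nonneg_left hXvr.le (by positivity)
  nlinarith [abs_nonneg c]
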